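/- The formula φ(y,z) := ({∅} ⊗ ({∅} ∪ y) = z ∧ y ⊊ z) admits models of every sufficiently large finite rank but no infinite model: every pair (Y,Z) satisfying φ has Z of finite rank, and for every n ∈ ω there is a satisfying pair (Y,Z) with rank(Z) > n. In particular sup{ rank(Z) : (Y,Z) satisfies φ } = ω. -/

import Mathlib

/-- Unordered Cartesian product: `A ⊗ B = { {a,b} : a ∈ A, b ∈ B }`. -/
def ZFSet.uprod (A B : ZFSet) : ZFSet :=
  ZFSet.sep (fun z => ∃ a ∈ A, ∃ b ∈ B, z = {a, b}) (ZFSet.powerset (A ∪ B))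

/-- The formula `φ(y,z) := {∅} ⊗ ({∅} ∪ y) = z ∧ y ⊊ z`. -/
def phi (Y Z : ZFSet) : Prop :=
  ZFSet.uprod {∅} ({∅} ∪ Y) = Z ∧ Y ⊆ Z ∧ Y ≠ Z

namespace Stmt5Aux

open ZFSet

lemma mem_uprod {A B z : ZFSet} :
    z ∈ ZFSet.uprod A B ↔ ∃ a ∈ A, ∃ b ∈ B, z = {a, b} := by
  simp only [ZFSet.uprod, ZFSet.mem_sep, ZFSet.mem_powerset]
  constructor
  · rintro ⟨-, h⟩; exact h
  · rintro ⟨a, ha, b, hb, rfl⟩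
    refine ⟨?_, a, ha, b, hb, rfl⟩
    intro w hw
    rw [ZFSet.mem_union]
    rcases ZFSet.mem_pair.1 hw with rfl | rfl
    exacts [Or.inl ha, Or.inr hb]

/-- membership in `Z` for `phi Y Z` -/
lemma mem_Z {Y Z z : ZFSet} (h : phi Y Z) :
    z ∈ Z ↔ ∃ b, (b = ∅ ∨ b ∈ Y) ∧ z = {∅, b} := by
  rw [← h.1, mem_uprod]
  constructor
  · rintro ⟨a, ha, b, hb, rfl⟩
    rw [ZFSet.mem_singleton] at ha
    rw [ZFSet.mem_union, ZFSet.mem_singleton] at hb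
    exact ⟨b, hb, by rw [ha]⟩
  · rintro ⟨b, hb, rfl⟩
    refine ⟨∅, ZFSet.mem_singleton.2 rfl, b, ?_, rfl⟩
    rw [ZFSet.mem_union, ZFSet.mem_singleton]
    exact hb

lemma pair_empty_inj {b b' : ZFSet} (h : ({∅, b} : ZFSet) = {∅, b'}) : b = b' := by
  have hb : b ∈ ({∅, b'} : ZFSet) := h ▸ ZFSet.mem_pair.2 (Or.inr rfl)
  have hb' : b' ∈ ({∅, b} : ZFSet) := h ▸ ZFSet.mem_pair.2 (Or.inr rfl)
  rcases ZFSet.mem_pair.1 hb with rfl | rfl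
  · rcases ZFSet.mem_pair.1 hb' with rfl | rfl <;> rfl
  · rfl

lemma pair_empty_empty : ({∅, ∅} : ZFSet) = {∅} := by
  apply ZFSet.ext
  intro z
  simp [ZFSet.mem_pair, ZFSet.mem_singleton, or_self]

/-- The chain `t 0 = {∅}`, `t (n+1) = {∅, t n}`. -/
noncomputable def t : ℕ → ZFSet
  | 0 => {∅}
  | n + 1 => {∅, t n}

lemma rank_t (n : ℕ) : (t n).rank = (n : Ordinal) + 1 := by
  induction n with
  | zero => simp [t]
  | succ n ih =>
    have : (t (n+1)).rank = max (Order.succ (ZFSet.rank ∅)) (Order.succ ((t n).rank)) :=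
      ZFSet.rank_pair _ _
    rw [this, ih]
    simp only [ZFSet.rank_empty, Order.succ_eq_add_one]
    rw [max_eq_right (add_le_add_left zero_le 1)]
    push_cast; ring_nf

lemma t_ne_empty (n : ℕ) : t n ≠ ∅ := by
  intro h
  have : (∅ : ZFSet) ∈ t n := by
    cases n <;> simp [t, ZFSet.mem_singleton, ZFSet.mem_pair]
  rw [h] at this
  exact ZFSet.notMem_empty _ this

lemma t_injective : Function.Injective t := by
  intro n m h
  have := rank_t n
  rw [h, rank_t m] at this
  have h2 : Order.succ (m : Ordinal) = Order.succ (n : Ordinal) := by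
    rwa [Ordinal.add_one_eq_succ, Ordinal.add_one_eq_succ] at this
  have : (n : Ordinal) = m := (Order.succ_injective h2).symm
  exact_mod_cast this

/-- Every element of `Y` is some `t n`. -/
lemma elements_are_t {Y Z : ZFSet} (h : phi Y Z) :
    ∀ y : ZFSet, y ∈ Y → ∃ n, y = t n := by
  intro y
  induction y using ZFSet.inductionOn with
  | _ y ih =>
    intro hy
    obtain ⟨b, hb, rfl⟩ := (mem_Z h).1 (h.2.1 hy)
    rcases hb with rfl | hbY
    · exact ⟨0, by rw [pair_empty_empty]; rfl⟩
    · have hbmem : b ∈ ({∅, b} : ZFSet) := ZFSet.mem_pair.2 (Or.inr rfl)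
      obtain ⟨n, rfl⟩ := ih b hbmem hbY
      exact ⟨n + 1, rfl⟩

lemma t_succ_mem {Y Z : ZFSet} (h : phi Y Z) {n : ℕ} (hn : t (n+1) ∈ Y) : t n ∈ Y := by
  obtain ⟨b, hb, heq⟩ := (mem_Z h).1 (h.2.1 hn)
  have hbt : t n = b := pair_empty_inj heq
  rcases hb with rfl | hbY
  · exact absurd hbt (t_ne_empty n)
  · rwa [hbt]

lemma t_mono_mem {Y Z : ZFSet} (h : phi Y Z) {n m : ℕ} (hmn : m ≤ n) (hn : t n ∈ Y) :
    t m ∈ Y := by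
  induction n with
  | zero => simpa [Nat.le_zero.1 hmn] using hn
  | succ n ih =>
    rcases Nat.lt_or_ge m (n+1) with hlt | hge
    · exact ih (Nat.lt_succ_iff.1 hlt) (t_succ_mem h hn)
    · have : m = n + 1 := le_antisymm hmn hge
      rwa [this]

/-- Part 1: finite rank. -/
lemma part1 {Y Z : ZFSet} (h : phi Y Z) : Z.rank < Ordinal.omega0 := by
  by_cases hall : ∀ n : ℕ, t n ∈ Y
  · -- then Y = Z, contradiction
    exfalso
    apply h.2.2
    apply ZFSet.ext
    intro z
    constructor
    · exact fun hz => h.2.1 hz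
    · intro hz
      obtain ⟨b, hb, rfl⟩ := (mem_Z h).1 hz
      rcases hb with rfl | hbY
      · rw [pair_empty_empty]
        exact hall 0
      · obtain ⟨n, rfl⟩ := elements_are_t h b hbY
        exact hall (n + 1)
  · push_neg at hall
    obtain ⟨N, hN⟩ := hall
    have hrank : Z.rank ≤ ((N : Ordinal) + 2) := by
      rw [ZFSet.rank_le_iff]
      intro z hz
      obtain ⟨b, hb, rfl⟩ := (mem_Z h).1 hz
      have hbrank : b.rank ≤ (N : Ordinal) := by
        rcases hb with rfl | hbY
        · simp
        · obtain ⟨m, rfl⟩ := elements_are_t h b hbY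
          have hmN : m < N := by
            by_contra hge
            push_neg at hge
            exact hN (t_mono_mem h hge hbY)
          rw [rank_t]
          have : (m : Ordinal) + 1 ≤ (N : Ordinal) := by
            exact_mod_cast Nat.succ_le_of_lt hmN
          exact this
      have : ZFSet.rank ({∅, b} : ZFSet) = max (Order.succ (ZFSet.rank ∅))
          (Order.succ (b.rank)) := ZFSet.rank_pair _ _
      rw [this]
      simp only [ZFSet.rank_empty, Order.succ_eq_add_one, zero_add]
      rw [max_lt_iff]
      constructor
      · calc (1 : Ordinal) < 2 := by norm_num
          _ ≤ (N : Ordinal) + 2 := le_add_of_nonneg_left zero_le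
      · calc b.rank + 1 ≤ (N : Ordinal) + 1 := add_le_add_left hbrank 1
          _ < (N : Ordinal) + 2 := by
            apply add_lt_add_right
            norm_num
    calc Z.rank ≤ (N : Ordinal) + 2 := hrank
      _ = ((N + 2 : ℕ) : Ordinal) := by push_cast; ring_nf
      _ < Ordinal.omega0 := Ordinal.nat_lt_omega0 _

/-- The finite chain `{t 0, ..., t n}`. -/
noncomputable def Ych : ℕ → ZFSet
  | 0 => {t 0}
  | n + 1 => insert (t (n+1)) (Ych n)

lemma mem_Ych {n : ℕ} {y : ZFSet} : y ∈ Ych n ↔ ∃ m ≤ n, y = t m := by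
  induction n with
  | zero =>
    simp only [Ych, ZFSet.mem_singleton]
    constructor
    · rintro rfl; exact ⟨0, le_refl _, rfl⟩
    · rintro ⟨m, hm, rfl⟩; rw [Nat.le_zero.1 hm]
  | succ n ih =>
    simp only [Ych, ZFSet.mem_insert_iff, ih]
    constructor
    · rintro (rfl | ⟨m, hm, rfl⟩)
      · exact ⟨n+1, le_refl _, rfl⟩
      · exact ⟨m, le_trans hm (Nat.le_succ n), rfl⟩
    · rintro ⟨m, hm, rfl⟩
      rcases Nat.lt_or_ge m (n+1) with hlt | hge
      · exact Or.inr ⟨m, Nat.lt_succ_iff.1 hlt, rfl⟩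
      · left
        rw [le_antisymm hm hge]

lemma phi_Ych (n : ℕ) : phi (Ych n) (Ych (n+1)) := by
  refine ⟨?_, ?_, ?_⟩
  · apply ZFSet.ext
    intro z
    rw [mem_uprod]
    constructor
    · rintro ⟨a, ha, b, hb, rfl⟩
      rw [ZFSet.mem_singleton] at ha
      subst ha
      rw [ZFSet.mem_union, ZFSet.mem_singleton] at hb
      rcases hb with rfl | hbY
      · rw [pair_empty_empty]
        exact mem_Ych.2 ⟨0, Nat.zero_le _, rfl⟩
      · obtain ⟨m, hm, rfl⟩ := mem_Ych.1 hbY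
        exact mem_Ych.2 ⟨m+1, Nat.succ_le_succ hm, rfl⟩
    · intro hz
      obtain ⟨m, hm, rfl⟩ := mem_Ych.1 hz
      cases m with
      | zero =>
        refine ⟨∅, ZFSet.mem_singleton.2 rfl, ∅, ?_, ?_⟩
        · rw [ZFSet.mem_union, ZFSet.mem_singleton]; exact Or.inl rfl
        · rw [pair_empty_empty]; rfl
      | succ k =>
        refine ⟨∅, ZFSet.mem_singleton.2 rfl, t k, ?_, rfl⟩
        rw [ZFSet.mem_union]
        exact Or.inr (mem_Ych.2 ⟨k, Nat.lt_succ_iff.1 hm, rfl⟩)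
  · intro y hy
    obtain ⟨m, hm, rfl⟩ := mem_Ych.1 hy
    exact mem_Ych.2 ⟨m, le_trans hm (Nat.le_succ n), rfl⟩
  · intro heq
    have h1 : t (n+1) ∈ Ych (n+1) := mem_Ych.2 ⟨n+1, le_refl _, rfl⟩
    rw [← heq] at h1
    obtain ⟨m, hm, hmeq⟩ := mem_Ych.1 h1
    have := t_injective hmeq.symm
    omega

lemma part2 (n : ℕ) : ∃ Y Z : ZFSet, phi Y Z ∧ (n : Ordinal) < Z.rank := by
  refine ⟨Ych n, Ych (n+1), phi_Ych n, ?_⟩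
  have h1 : t (n+1) ∈ Ych (n+1) := mem_Ych.2 ⟨n+1, le_refl _, rfl⟩
  have h2 : (t (n+1)).rank < (Ych (n+1)).rank := ZFSet.rank_lt_of_mem h1
  have h3 : (n : Ordinal) < (t (n+1)).rank := by
    rw [rank_t]
    calc (n : Ordinal) < (n : Ordinal) + 1 := lt_add_one _
      _ ≤ ((n+1 : ℕ) : Ordinal) + 1 := by
        apply add_le_add_left
        exact_mod_cast Nat.le_succ n
  exact h3.trans h2

end Stmt5Aux

theorem stmt_5 :
    (∀ Y Z : ZFSet, phi Y Z → Z.rank < Ordinal.omega0) ∧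
    (∀ n : ℕ, ∃ Y Z : ZFSet, phi Y Z ∧ (n : Ordinal) < Z.rank) ∧
    sSup {o : Ordinal | ∃ Y Z : ZFSet, phi Y Z ∧ Z.rank = o} = Ordinal.omega0 := by
  refine ⟨fun Y Z h => Stmt5Aux.part1 h, Stmt5Aux.part2, ?_⟩
  set S : Set Ordinal := {o : Ordinal | ∃ Y Z : ZFSet, phi Y Z ∧ Z.rank = o} with hS
  have hub : Ordinal.omega0 ∈ upperBounds S := by
    rintro o ⟨Y, Z, hphi, rfl⟩
    exact le_of_lt (Stmt5Aux.part1 hphi)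
  have hbdd : BddAbove S := ⟨_, hub⟩
  apply le_antisymm
  · exact csSup_le' hub
  · rw [Ordinal.omega0_le]
    intro n
    obtain ⟨Y, Z, hphi, hn⟩ := Stmt5Aux.part2 n
    exact le_of_lt (lt_of_lt_of_le hn (le_csSup hbdd ⟨Y, Z, hphi, rfl⟩))
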